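/- Let L ∈ ℝ^{n×n} be symmetric positive semidefinite, M > 0, D > 0, and set A = [[0_n, I_n], [−(1/M)L, −(D/M)I_n]], F = [0_n; (1/M)I_n], C = [L^{1/2}, 0_n]. Then the symmetric matrix P = [[(D/2)I_n + (M/(2D))L, (M/2)I_n], [(M/2)I_n, (M²/(2D))I_n]] satisfies the Lyapunov equation P·A + Aᵀ·P = −CᵀC, and trace(Fᵀ P F) = n/(2D). (Thus the H₂ norm of the swing dynamics with phase cohesiveness output is √(n/(2D)), independent of the inertia M and of the network topology.) -/

import Mathlib

open Matrix

/-- The swing-dynamics state matrix `A = [[0, I], [−(1/M)L, −(D/M)I]]`. -/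
noncomputable def swingA (n : ℕ) (M D : ℝ) (L : Matrix (Fin n) (Fin n) ℝ) :
    Matrix (Fin n ⊕ Fin n) (Fin n ⊕ Fin n) ℝ :=
  Matrix.fromBlocks 0 1 (-(1 / M) • L) (-(D / M) • 1)

/-- The swing-dynamics input matrix `F = [0; (1/M)I]`. -/
noncomputable def swingF (n : ℕ) (M : ℝ) : Matrix (Fin n ⊕ Fin n) (Fin n) ℝ :=
  Matrix.fromRows 0 ((1 / M) • 1)

/-- The positive semidefinite square root of a positive semidefinite matrix, as defined in
Mathlib of December 2024 (`Matrix.PosSemidef.sqrt`, since removed from Mathlib), for real matrices. -/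
noncomputable def Matrix.PosSemidef.sqrt {n : Type*} [Fintype n] [DecidableEq n]
    {A : Matrix n n ℝ} (hA : A.PosSemidef) : Matrix n n ℝ :=
  hA.1.eigenvectorUnitary.1 * diagonal ((↑) ∘ (√·) ∘ hA.1.eigenvalues) *
  (star hA.1.eigenvectorUnitary : Matrix n n ℝ)

/-- The phase cohesiveness output matrix `C = [L^{1/2}, 0]`, where `L^{1/2}`
is the positive semidefinite square root of `L`. -/
noncomputable def swingCphase (n : ℕ) {L : Matrix (Fin n) (Fin n) ℝ}
    (hL : L.PosSemidef) : Matrix (Fin n) (Fin n ⊕ Fin n) ℝ :=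
  Matrix.fromCols hL.sqrt 0

/-- The candidate observability Gramian
`P = [[(D/2)I + (M/(2D))L, (M/2)I], [(M/2)I, (M²/(2D))I]]`. -/
noncomputable def swingPphase (n : ℕ) (M D : ℝ)
    (L : Matrix (Fin n) (Fin n) ℝ) :
    Matrix (Fin n ⊕ Fin n) (Fin n ⊕ Fin n) ℝ :=
  Matrix.fromBlocks ((D / 2) • 1 + (M / (2 * D)) • L) ((M / 2) • 1)
    ((M / 2) • 1) ((M ^ 2 / (2 * D)) • 1)

theorem swing_sqrt_transpose {n : ℕ} {L : Matrix (Fin n) (Fin n) ℝ} (hL : L.PosSemidef) :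
    (hL.sqrt)ᵀ = hL.sqrt := by
  simp only [Matrix.PosSemidef.sqrt, transpose_mul, diagonal_transpose, star_eq_conjTranspose,
    conjTranspose_eq_transpose_of_trivial, transpose_transpose, Matrix.mul_assoc]

theorem swing_sqrt_mul_self {n : ℕ} {L : Matrix (Fin n) (Fin n) ℝ} (hL : L.PosSemidef) :
    hL.sqrt * hL.sqrt = L := by
  set U : Matrix (Fin n) (Fin n) ℝ := hL.1.eigenvectorUnitary.1 with hU
  have hUU : (star U) * U = 1 := Unitary.coe_star_mul_self _
  have hspec := hL.1.spectral_theorem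
  rw [Unitary.conjStarAlgAut_apply] at hspec
  conv_rhs => rw [hspec]
  simp only [Matrix.PosSemidef.sqrt]
  rw [← hU]
  calc U * diagonal ((↑) ∘ (√·) ∘ hL.1.eigenvalues) * star U *
        (U * diagonal ((↑) ∘ (√·) ∘ hL.1.eigenvalues) * star U)
      = U * (diagonal ((↑) ∘ (√·) ∘ hL.1.eigenvalues) * (star U * U) *
          diagonal ((↑) ∘ (√·) ∘ hL.1.eigenvalues)) * star U := by
        simp only [Matrix.mul_assoc]
    _ = _ := by
        rw [hUU, Matrix.mul_one, diagonal_mul_diagonal]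
        congr 2
        congr 1
        funext i
        simp [Real.mul_self_sqrt (hL.eigenvalues_nonneg i)]

/-- Observability Gramian computation for the swing dynamics with phase
cohesiveness output: `P` satisfies the Lyapunov equation `PA + AᵀP = −CᵀC`
and `trace(FᵀPF) = n/(2D)`.  Hence the H₂ norm with phase cohesiveness
output is `√(n/(2D))`, independent of the inertia `M` and of the network
topology. -/
theorem swing_phase_H2_gramian (n : ℕ) (M D : ℝ) (hM : 0 < M) (hD : 0 < D)
    (L : Matrix (Fin n) (Fin n) ℝ) (hL : L.PosSemidef) :
    swingPphase n M D L * swingA n M D L + (swingA n M D L)ᵀ * swingPphase n M D L =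
      -((swingCphase n hL)ᵀ * swingCphase n hL) ∧
    ((swingF n M)ᵀ * swingPphase n M D L * swingF n M).trace = n / (2 * D) := by
  have hM' : M ≠ 0 := hM.ne'
  have hD' : D ≠ 0 := hD.ne'
  have hs : (hL.sqrt)ᵀ = hL.sqrt := by
    exact swing_sqrt_transpose hL
  have hLt : Lᵀ = L := by
    have := hL.1
    simpa [Matrix.IsHermitian, conjTranspose_eq_transpose_of_trivial] using this
  constructor
  · rw [swingPphase, swingA, swingCphase, transpose_fromCols, fromBlocks_transpose,
      fromRows_mul_fromCols, fromBlocks_multiply, fromBlocks_multiply,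
      fromBlocks_add, hs, swing_sqrt_mul_self hL]
    rw [show (-fromBlocks L (hL.sqrt * 0) (0ᵀ * hL.sqrt) ((0:Matrix (Fin n) (Fin n) ℝ)ᵀ * 0)
        : Matrix _ _ ℝ) = fromBlocks (-L) 0 0 0 by
      simp [Matrix.fromBlocks_neg]]
    simp only [Matrix.mul_zero, Matrix.zero_mul, Matrix.mul_one, Matrix.one_mul,
      Matrix.transpose_smul, Matrix.transpose_neg, Matrix.transpose_one, hLt,
      Matrix.transpose_zero, Matrix.smul_mul, Matrix.mul_smul, zero_add, add_zero,
      smul_smul, neg_smul, smul_neg, neg_neg]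
    have e1 : M / 2 * (1 / M) = (1/2 : ℝ) := by field_simp
    have e2 : M / 2 * (D / M) = D / 2 := by field_simp
    have e3 : M ^ 2 / (2 * D) * (1 / M) = M / (2 * D) := by field_simp
    have e4 : M ^ 2 / (2 * D) * (D / M) = M / 2 := by field_simp
    rw [e1, e2, e3, e4, fromBlocks_inj]
    refine ⟨by module, by module, by module, by module⟩
  · rw [swingF, swingPphase, transpose_fromRows, fromCols_mul_fromBlocks,
      fromCols_mul_fromRows]
    simp only [Matrix.transpose_smul, Matrix.transpose_zero, Matrix.transpose_one,
      Matrix.zero_mul, Matrix.mul_zero, Matrix.smul_mul, Matrix.mul_smul,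
      Matrix.one_mul, Matrix.mul_one, zero_add, add_zero, smul_smul, smul_add,
      trace_smul, trace_one, trace_add, trace_zero, smul_eq_mul]
    simp only [Fintype.card_fin]
    field_simp
    ring
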